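/- If b = d then there exists a scale: a family {f_α : α < b} ⊆ ω^ω of strictly increasing functions that is <*-increasing and ≤*-dominating, and consequently (using that sets of size < b are λ'-sets) the set X of ranges of the f_α is a (†)-λ'-set which is not a λ'-set. -/

import Mathlib

open Filter Set

/-- The bounding number 𝔟. -/
noncomputable def bNumber : Cardinal :=
  sInf {c | ∃ F : Set (ℕ → ℕ), Cardinal.mk F = c ∧
    ¬ ∃ g : ℕ → ℕ, ∀ f ∈ F, ∀ᶠ n in atTop, f n ≤ g n}

/-- The dominating number 𝔡. -/
noncomputable def dNumber : Cardinal :=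
  sInf {c | ∃ F : Set (ℕ → ℕ), Cardinal.mk F = c ∧
    ∀ g : ℕ → ℕ, ∃ f ∈ F, ∀ᶠ n in atTop, g n ≤ f n}

def IsLambdaPrime {α : Type*} [TopologicalSpace α] (X : Set α) : Prop :=
  ∀ A : Set α, A.Countable → ∃ G : Set α, IsGδ G ∧ (X ∪ A) ∩ G = A

/-- `G_g ⊆ 2^ω`: (characteristic functions of) infinite subsets of ω whose increasing
enumeration drops below `g` infinitely often. -/
def Gg (g : ℕ → ℕ) : Set (ℕ → Bool) :=
  {x | {n | x n = true}.Infinite ∧ ∃ᶠ n in atTop, Nat.nth (fun k => x k = true) n < g n}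

/-- `X` is a `(†)`-λ'-set: `X ∩ G_g` is a λ'-set for every `g`. -/
def IsDaggerLambdaPrime (X : Set (ℕ → Bool)) : Prop :=
  ∀ g : ℕ → ℕ, IsLambdaPrime (X ∩ Gg g)

set_option linter.unusedSectionVars false

namespace BD


lemma unbounded_univ : ¬ ∃ g : ℕ → ℕ, ∀ f ∈ (univ : Set (ℕ → ℕ)), ∀ᶠ n in atTop, f n ≤ g n := by
  rintro ⟨g, hg⟩
  obtain ⟨n, hn⟩ := (hg (fun n => g n + 1) (mem_univ _)).exists
  omega

lemma bSet_nonempty : {c | ∃ F : Set (ℕ → ℕ), Cardinal.mk F = c ∧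
    ¬ ∃ g : ℕ → ℕ, ∀ f ∈ F, ∀ᶠ n in atTop, f n ≤ g n}.Nonempty :=
  ⟨_, univ, rfl, unbounded_univ⟩

lemma b_le_of_unbounded (F : Set (ℕ → ℕ))
    (hF : ¬ ∃ g : ℕ → ℕ, ∀ f ∈ F, ∀ᶠ n in atTop, f n ≤ g n) :
    bNumber ≤ Cardinal.mk F :=
  csInf_le' ⟨F, rfl, hF⟩

lemma bounded_of_mk_lt (F : Set (ℕ → ℕ)) (h : Cardinal.mk F < bNumber) :
    ∃ g : ℕ → ℕ, ∀ f ∈ F, ∀ᶠ n in atTop, f n ≤ g n := by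
  by_contra h'
  exact absurd (b_le_of_unbounded F h') (not_le.2 h)

lemma bounded_of_mk_lt' {ι : Type} (F : ι → ℕ → ℕ) (h : Cardinal.mk ι < bNumber) :
    ∃ g : ℕ → ℕ, ∀ i, ∀ᶠ n in atTop, F i n ≤ g n := by
  obtain ⟨g, hg⟩ := bounded_of_mk_lt (Set.range F) (lt_of_le_of_lt Cardinal.mk_range_le h)
  exact ⟨g, fun i => hg _ (mem_range_self i)⟩

lemma aleph0_le_b : Cardinal.aleph0 ≤ bNumber := by
  refine le_csInf bSet_nonempty ?_
  rintro c ⟨F, rfl, hF⟩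
  by_contra hlt
  push_neg at hlt
  have hfin : F.Finite := by
    rwa [Cardinal.lt_aleph0_iff_set_finite] at hlt
  refine hF ⟨fun n => hfin.toFinset.sup (fun f => f n), fun f hf => ?_⟩
  exact Eventually.of_forall fun n => Finset.le_sup (f := fun f => f n) (hfin.mem_toFinset.2 hf)

lemma exists_dominating : ∃ D : Set (ℕ → ℕ), Cardinal.mk D = dNumber ∧
    ∀ g : ℕ → ℕ, ∃ f ∈ D, ∀ᶠ n in atTop, g n ≤ f n := by
  have hne : {c | ∃ F : Set (ℕ → ℕ), Cardinal.mk F = c ∧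
      ∀ g : ℕ → ℕ, ∃ f ∈ F, ∀ᶠ n in atTop, g n ≤ f n}.Nonempty :=
    ⟨_, univ, rfl, fun g => ⟨g, mem_univ _, Eventually.of_forall fun _ => le_rfl⟩⟩
  obtain ⟨F, hF, hdom⟩ := csInf_mem hne
  exact ⟨F, hF, hdom⟩

lemma step (S : Set (ℕ → ℕ)) (g h : ℕ → ℕ) (hS : ∀ s ∈ S, ∀ᶠ n in atTop, s n ≤ g n) :
    ∃ c : ℕ → ℕ, StrictMono c ∧ (∀ n, h n ≤ c n) ∧ (∀ s ∈ S, ∀ᶠ n in atTop, s n < c n) := by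
  refine ⟨fun n => (Finset.range (n+1)).sup (fun k => max (g k) (h k)) + n, ?_, ?_, ?_⟩
  · intro m n hmn
    dsimp only
    have : (Finset.range (m+1)).sup (fun k => max (g k) (h k)) ≤
        (Finset.range (n+1)).sup (fun k => max (g k) (h k)) :=
      Finset.sup_mono (Finset.range_subset_range.2 (by omega))
    omega
  · intro n
    dsimp only
    have : max (g n) (h n) ≤ (Finset.range (n+1)).sup (fun k => max (g k) (h k)) :=
      Finset.le_sup (f := fun k => max (g k) (h k)) (Finset.self_mem_range_succ n)
    omega
  · intro s hs
    filter_upwards [hS s hs, eventually_ge_atTop 1] with n hn h1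
    have : max (g n) (h n) ≤ (Finset.range (n+1)).sup (fun k => max (g k) (h k)) :=
      Finset.le_sup (f := fun k => max (g k) (h k)) (Finset.self_mem_range_succ n)
    omega


section Scale

variable {ι : Type} [LinearOrder ι] [WellFoundedLT ι]

lemma scale_step_ex (e : ι → ℕ → ℕ) (hb : ∀ a : ι, Cardinal.mk {b : ι | b < a} < bNumber)
    (a : ι) (IH : ∀ b, b < a → ℕ → ℕ) :
    ∃ c : ℕ → ℕ, StrictMono c ∧ (∀ n, e a n ≤ c n) ∧
      ∀ b, ∀ hba : b < a, ∀ᶠ n in atTop, IH b hba n < c n := by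
  obtain ⟨g, hg⟩ := bounded_of_mk_lt' (fun b : {b : ι | b < a} => IH b.1 b.2) (hb a)
  obtain ⟨c, hc1, hc2, hc3⟩ := step (Set.range (fun b : {b : ι | b < a} => IH b.1 b.2)) g (e a)
    (by rintro s ⟨b, rfl⟩; exact hg b)
  exact ⟨c, hc1, hc2, fun b hba => hc3 _ (mem_range_self (⟨b, hba⟩ : {b : ι | b < a}))⟩

noncomputable def scaleFun (e : ι → ℕ → ℕ)
    (hb : ∀ a : ι, Cardinal.mk {b : ι | b < a} < bNumber) : ι → ℕ → ℕ :=
  WellFounded.fix wellFounded_lt (fun a IH => Classical.choose (scale_step_ex e hb a IH))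

lemma scaleFun_spec (e : ι → ℕ → ℕ) (hb : ∀ a : ι, Cardinal.mk {b : ι | b < a} < bNumber)
    (a : ι) :
    StrictMono (scaleFun e hb a) ∧ (∀ n, e a n ≤ scaleFun e hb a n) ∧
      ∀ b, b < a → ∀ᶠ n in atTop, scaleFun e hb b n < scaleFun e hb a n := by
  have key : scaleFun e hb a
      = Classical.choose (scale_step_ex e hb a (fun b _ => scaleFun e hb b)) :=
    WellFounded.fix_eq wellFounded_lt (fun a IH => Classical.choose (scale_step_ex e hb a IH)) a
  have hspec := Classical.choose_spec (scale_step_ex e hb a (fun b _ => scaleFun e hb b))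
  rw [key]
  exact ⟨hspec.1, hspec.2.1, fun b hba => hspec.2.2 b hba⟩

end Scale

def cyl (d : ℕ → Bool) (k : ℕ) : Set (ℕ → Bool) := {y | ∀ i < k, y i = d i}

lemma isOpen_cyl (d : ℕ → Bool) (k : ℕ) : IsOpen (cyl d k) := by
  have : cyl d k = ⋂ i ∈ Finset.range k, {y : ℕ → Bool | y i = d i} := by
    ext y; simp [cyl]
  rw [this]
  refine isOpen_biInter_finset fun i _ => ?_
  show IsOpen ((fun y : ℕ → Bool => y i) ⁻¹' {d i})
  exact (isOpen_discrete _).preimage (continuous_apply i)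

lemma self_mem_cyl (d : ℕ → Bool) (k : ℕ) : d ∈ cyl d k := fun _ _ => rfl

lemma isLambdaPrime_of_mk_lt (X : Set (ℕ → Bool)) (hX : Cardinal.mk X < bNumber) :
    IsLambdaPrime X := by
  intro A hA
  rcases A.eq_empty_or_nonempty with rfl | hne
  · exact ⟨∅, isOpen_empty.isGδ, by simp⟩
  obtain ⟨v, hv⟩ := hA.exists_eq_range hne
  set u : ℕ → (ℕ → Bool) := fun n => v (Nat.unpair n).1 with hu
  have hu_mem : ∀ n, u n ∈ A := fun n => hv ▸ mem_range_self _
  have hu_freq : ∀ x ∈ A, ∀ m : ℕ, ∃ n, m ≤ n ∧ u n = x := by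
    intro x hx m
    rw [hv] at hx
    obtain ⟨k, rfl⟩ := hx
    exact ⟨Nat.pair k m, Nat.right_le_pair k m, by simp [hu]⟩
  have hFx : ∀ x : ℕ → Bool, x ∉ A → ∀ n : ℕ, ∃ K, ∀ k, K ≤ k → x ∉ cyl (u n) k := by
    intro x hx n
    have hne' : x ≠ u n := fun h => hx (h ▸ hu_mem n)
    have : ∃ i, x i ≠ u n i := by
      by_contra h
      push_neg at h
      exact hne' (funext h)
    obtain ⟨i, hi⟩ := this
    exact ⟨i + 1, fun k hk hxc => hi (hxc i (by omega))⟩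
  choose! FK hFK using hFx
  have hcard : Cardinal.mk (X \ A : Set (ℕ → Bool)) < bNumber :=
    lt_of_le_of_lt (Cardinal.mk_le_mk_of_subset diff_subset) hX
  obtain ⟨g, hg⟩ := bounded_of_mk_lt' (fun x : (X \ A : Set (ℕ → Bool)) => FK x.1) hcard
  refine ⟨⋂ m : ℕ, ⋃ n ∈ {n : ℕ | m ≤ n}, cyl (u n) (g n), ?_, ?_⟩
  · exact IsGδ.iInter_of_isOpen fun m =>
      isOpen_biUnion fun n _ => isOpen_cyl (u n) (g n)
  · apply Set.Subset.antisymm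
    · rintro y ⟨hyXA, hyG⟩
      by_contra hyA
      have hyX : y ∈ X := hyXA.resolve_right hyA
      have hgy := hg ⟨y, hyX, hyA⟩
      rw [eventually_atTop] at hgy
      obtain ⟨N, hN⟩ := hgy
      have := mem_iInter.1 hyG N
      simp only [mem_iUnion, mem_setOf_eq] at this
      obtain ⟨n, hn, hcy⟩ := this
      exact hFK y hyA n (g n) (hN n hn) hcy
    · intro x hx
      refine ⟨Or.inr hx, ?_⟩
      refine mem_iInter.2 fun m => ?_
      obtain ⟨n, hmn, hun⟩ := hu_freq x hx m
      simp only [mem_iUnion, mem_setOf_eq]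
      exact ⟨n, hmn, hun ▸ self_mem_cyl (u n) (g n)⟩

lemma nth_charFun {f : ℕ → ℕ} (hf : StrictMono f) {x : ℕ → Bool}
    (hx : ∀ n, x n = true ↔ n ∈ Set.range f) (m : ℕ) :
    Nat.nth (fun k => x k = true) m = f m := by
  have hcount : Nat.count (fun k => x k = true) (f m) = m := by
    rw [Nat.count_eq_card_filter_range]
    have heq : ({k ∈ Finset.range (f m) | x k = true}) = (Finset.range m).image f := by
      ext k
      simp only [Finset.mem_filter, Finset.mem_range, Finset.mem_image, hx]
      constructor
      · rintro ⟨hk, j, rfl⟩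
        exact ⟨j, hf.lt_iff_lt.1 hk, rfl⟩
      · rintro ⟨j, hj, rfl⟩
        exact ⟨hf hj, j, rfl⟩
    rw [heq, Finset.card_image_of_injective _ hf.injective, Finset.card_range]
  have hpm : x (f m) = true := (hx (f m)).2 ⟨m, rfl⟩
  have h2 := Nat.nth_count (p := fun k => x k = true) hpm
  rw [hcount] at h2
  exact h2

lemma charFun_infinite {f : ℕ → ℕ} (hf : StrictMono f) {x : ℕ → Bool}
    (hx : ∀ n, x n = true ↔ n ∈ Set.range f) : {n | x n = true}.Infinite := by
  have : {n | x n = true} = Set.range f := by ext n; exact hx n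
  rw [this]
  exact Set.infinite_range_of_injective hf.injective

lemma count_eq_fin (x : ℕ → Bool) (N : ℕ) :
    Nat.count (fun k => x k = true) N
      = (Finset.univ.filter (fun i : Fin N => x i.1 = true)).card := by
  rw [Nat.count_eq_card_filter_range]
  rw [← Finset.card_image_of_injective (Finset.univ.filter fun i : Fin N => x i.1 = true)
    Fin.val_injective]
  congr 1
  ext k
  simp only [Finset.mem_filter, Finset.mem_range, Finset.mem_image, Finset.mem_univ, true_and]
  constructor
  · rintro ⟨hk, hxk⟩
    exact ⟨⟨k, hk⟩, hxk, rfl⟩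
  · rintro ⟨i, hxi, rfl⟩
    exact ⟨i.2, hxi⟩

lemma compact_bound (K : Set (ℕ → Bool)) (hK : IsClosed K)
    (hinf : ∀ x ∈ K, {n | x n = true}.Infinite) (m : ℕ) :
    ∃ N, ∀ x ∈ K, Nat.nth (fun k => x k = true) m < N := by
  have hcomp : IsCompact K := hK.isCompact
  set U : ℕ → Set (ℕ → Bool) := fun N => {x | m < Nat.count (fun k => x k = true) N} with hU
  have hUopen : ∀ N, IsOpen (U N) := by
    intro N
    have : U N = (fun (x : ℕ → Bool) (i : Fin N) => x i.1) ⁻¹'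
        {y : Fin N → Bool | m < (Finset.univ.filter (fun i : Fin N => y i = true)).card} := by
      ext x
      simp only [hU, mem_setOf_eq, mem_preimage, count_eq_fin]
    rw [this]
    exact (isOpen_discrete _).preimage (continuous_pi fun i => continuous_apply i.1)
  have hcover : K ⊆ ⋃ N, U N := by
    intro x hxK
    have hinfx := hinf x hxK
    refine mem_iUnion.2 ⟨Nat.nth (fun k => x k = true) m + 1, ?_⟩
    show m < Nat.count (fun k => x k = true) (Nat.nth (fun k => x k = true) m + 1)
    rw [Nat.count_nth_succ_of_infinite hinfx]
    omega
  obtain ⟨t, ht⟩ := hcomp.elim_finite_subcover U hUopen hcover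
  refine ⟨t.sup id, fun x hxK => ?_⟩
  have := ht hxK
  simp only [mem_iUnion] at this
  obtain ⟨N, hNt, hxN⟩ := this
  have hcnt : m < Nat.count (fun k => x k = true) (t.sup id) :=
    lt_of_lt_of_le hxN (Nat.count_monotone _ (Finset.le_sup (f := id) hNt))
  exact Nat.nth_lt_of_lt_count hcnt


end BD

theorem b_eq_d_gives_dagger_lambda_prime_not_lambda_prime
    (hbd : bNumber = dNumber) :
    ∃ f : (Cardinal.ord bNumber).ToType → (ℕ → ℕ),
      (∀ a, StrictMono (f a)) ∧
      (∀ a b, a < b → ∀ᶠ n in atTop, f a n < f b n) ∧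
      (∀ g : ℕ → ℕ, ∃ a, ∀ᶠ n in atTop, g n ≤ f a n) ∧
      ∀ X : Set (ℕ → Bool),
        X = {x | ∃ a, ∀ n, x n = true ↔ n ∈ Set.range (f a)} →
        IsDaggerLambdaPrime X ∧ ¬ IsLambdaPrime X := by
  classical
  set T := (Cardinal.ord bNumber).ToType with hT
  have hb : ∀ a : T, Cardinal.mk {b : T | b < a} < bNumber := fun a =>
    Cardinal.mk_Iio_ord_toType a
  obtain ⟨D, hDmk, hDdom⟩ := BD.exists_dominating
  have hTD : Cardinal.mk T = Cardinal.mk D := by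
    rw [Cardinal.mk_ord_toType, hbd, hDmk]
  obtain ⟨eqv⟩ := Cardinal.eq.1 hTD
  set e : T → ℕ → ℕ := fun a => ((eqv a : D) : ℕ → ℕ) with he
  have edom : ∀ g : ℕ → ℕ, ∃ a : T, ∀ᶠ n in atTop, g n ≤ e a n := by
    intro g
    obtain ⟨h, hhD, hh⟩ := hDdom g
    refine ⟨eqv.symm ⟨h, hhD⟩, ?_⟩
    simpa [he] using hh
  set f : T → ℕ → ℕ := BD.scaleFun e hb with hf
  have spec := fun a : T => BD.scaleFun_spec e hb a
  have prop1 : ∀ a : T, StrictMono (f a) := fun a => (spec a).1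
  have prop2 : ∀ a b : T, a < b → ∀ᶠ n in atTop, f a n < f b n :=
    fun a b hab => (spec b).2.2 a hab
  have prop3 : ∀ g : ℕ → ℕ, ∃ a : T, ∀ᶠ n in atTop, g n ≤ f a n := by
    intro g
    obtain ⟨a, ha⟩ := edom g
    exact ⟨a, ha.mono fun n hn => le_trans hn ((spec a).2.1 n)⟩
  refine ⟨f, prop1, prop2, prop3, ?_⟩
  intro X hXeq
  set χ : T → (ℕ → Bool) := fun a n => decide (n ∈ Set.range (f a)) with hχdef
  have hχ : ∀ (a : T) (n : ℕ), χ a n = true ↔ n ∈ Set.range (f a) := by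
    intro a n; simp [hχdef]
  have hχX : ∀ a : T, χ a ∈ X := by
    intro a; rw [hXeq]; exact ⟨a, hχ a⟩
  have hXform : ∀ x ∈ X, ∃ a : T, x = χ a ∧ (∀ n, x n = true ↔ n ∈ Set.range (f a)) := by
    intro x hx
    rw [hXeq] at hx
    obtain ⟨a, ha⟩ := hx
    refine ⟨a, funext fun n => ?_, ha⟩
    have h1 := ha n
    have h2 := hχ a n
    cases hb1 : x n <;> cases hb2 : χ a n <;> simp_all
  constructor
  · -- dagger
    intro g
    apply BD.isLambdaPrime_of_mk_lt
    obtain ⟨a0, ha0⟩ := prop3 g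
    have hsub : X ∩ Gg g ⊆ χ '' Set.Iic a0 := by
      rintro x ⟨hxX, hxinf, hxfreq⟩
      obtain ⟨a, hxeq, ha⟩ := hXform x hxX
      refine ⟨a, ?_, hxeq.symm⟩
      by_contra hlt
      simp only [Set.mem_Iic, not_le] at hlt
      have hev : ∀ᶠ n in atTop, g n ≤ f a n := by
        filter_upwards [ha0, prop2 a0 a hlt] with n h1 h2; omega
      have hfr : ∃ᶠ n in atTop, f a n < g n := by
        have hnth : ∀ n, Nat.nth (fun k => x k = true) n = f a n :=
          BD.nth_charFun (prop1 a) ha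
        exact hxfreq.mono fun n hn => by rwa [hnth n] at hn
      obtain ⟨n, h1, h2⟩ := (hfr.and_eventually hev).exists
      omega
    have hIio : Cardinal.mk (Set.Iio a0) < bNumber := hb a0
    have hIic : Cardinal.mk (Set.Iic a0) < bNumber := by
      rw [← Set.Iio_insert, Cardinal.mk_insert (by simp)]
      rcases lt_or_ge (Cardinal.mk (Set.Iio a0)) Cardinal.aleph0 with h | h
      · exact lt_of_lt_of_le (Cardinal.add_lt_aleph0 h Cardinal.one_lt_aleph0)
          BD.aleph0_le_b
      · rwa [Cardinal.add_one_eq h]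
    calc Cardinal.mk (X ∩ Gg g : Set (ℕ → Bool))
        ≤ Cardinal.mk (χ '' Set.Iic a0 : Set (ℕ → Bool)) :=
          Cardinal.mk_le_mk_of_subset hsub
      _ ≤ Cardinal.mk (Set.Iic a0) := Cardinal.mk_image_le
      _ < bNumber := hIic
  · -- not lambda prime
    intro hLP
    set A : Set (ℕ → Bool) := {x | {n | x n = true}.Finite} with hA
    have hAc : A.Countable := by
      have hsub : A ⊆ Set.range (fun s : Finset ℕ => fun n => decide (n ∈ s)) := by
        intro x hx
        refine ⟨hx.toFinset, funext fun n => ?_⟩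
        cases h : x n <;> simp [Set.Finite.mem_toFinset, h]
      exact (Set.countable_range _).mono hsub
    obtain ⟨G, hGδ, hGA⟩ := hLP A hAc
    have hAG : A ⊆ G := by
      intro x hx
      rw [← hGA] at hx
      exact hx.2
    have hXnotG : ∀ x ∈ X, x ∉ G := by
      intro x hxX hxG
      have hxA : x ∈ A := by rw [← hGA]; exact ⟨Or.inl hxX, hxG⟩
      obtain ⟨a, -, ha⟩ := hXform x hxX
      exact BD.charFun_infinite (prop1 a) ha hxA
    obtain ⟨Uo, hUo, hGeq⟩ := isGδ_iff_eq_iInter_nat.1 hGδ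
    have hKinf : ∀ n, ∀ x ∈ (Uo n)ᶜ, {k | x k = true}.Infinite := by
      intro n x hx
      by_contra hfin
      rw [Set.not_infinite] at hfin
      have : x ∈ G := hAG hfin
      rw [hGeq] at this
      exact hx (mem_iInter.1 this n)
    have hbd2 : ∀ n m : ℕ, ∃ N, ∀ x ∈ (Uo n)ᶜ, Nat.nth (fun k => x k = true) m < N :=
      fun n m => BD.compact_bound _ (hUo n).isClosed_compl (hKinf n) m
    choose B hB using hbd2
    obtain ⟨a, ha⟩ := prop3 (fun m => (Finset.range (m + 1)).sup (fun n => B n m))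
    have hxnot := hXnotG _ (hχX a)
    rw [hGeq] at hxnot
    have hex : ∃ n0, χ a ∈ (Uo n0)ᶜ := by
      by_contra hco
      push_neg at hco
      exact hxnot (mem_iInter.2 fun n => not_not.1 (hco n))
    obtain ⟨n0, hn0⟩ := hex
    rw [eventually_atTop] at ha
    obtain ⟨M, hM⟩ := ha
    set m := max M n0 with hm
    have h1 : Nat.nth (fun k => χ a k = true) m = f a m := BD.nth_charFun (prop1 a) (hχ a) m
    have h2 := hB n0 m _ hn0
    have h3 : B n0 m ≤ (Finset.range (m + 1)).sup (fun n => B n m) :=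
      Finset.le_sup (f := fun n => B n m) (Finset.mem_range.2 (Nat.lt_succ_of_le (le_max_right M n0)))
    have h4 := hM m (le_max_left _ _)
    omega
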